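/- arXiv:1811.08714 — 2 statements merged into one kernel-verified Lean document; each statement's English description precedes it below -/
import Mathlib

section
/- Let G ⊆ ℝ³ be split by a C² interface Σ = ∂G₋ into G₊ and G₋ with unit normal ν (outer for G₋'s complement orientation as in the text). Suppose (E,H,D,B) ∈ C(J̄, ℋ¹(G)) ∩ C¹(J̄, L²(G)) solves ∂_t B_± = -curl E_± on G_± and the tangential traces satisfy [E × ν] = 0 on J × Σ. If the normal jump satisfies [B·ν](t₀) = 0 on Σ, then [B·ν](t) = 0 on Σ for all t ∈ J. -/
open Matrix

noncomputable section

/-- `j`-th partial derivative of a vector field `u : ℝ³ → ℝ³`. -/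
def pderiv3 (u : (Fin 3 → ℝ) → (Fin 3 → ℝ)) (j : Fin 3) (x : Fin 3 → ℝ) : Fin 3 → ℝ :=
  fderiv ℝ u x (Pi.single j 1)

/-- The curl of a vector field `u : ℝ³ → ℝ³`. -/
def curl3 (u : (Fin 3 → ℝ) → (Fin 3 → ℝ)) (x : Fin 3 → ℝ) : Fin 3 → ℝ :=
  ![pderiv3 u 1 x 2 - pderiv3 u 2 x 1,
    pderiv3 u 2 x 0 - pderiv3 u 0 x 2,
    pderiv3 u 0 x 1 - pderiv3 u 1 x 0]

/-- The gradient of a scalar function on `ℝ³`. -/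
def grad3 (φ : (Fin 3 → ℝ) → ℝ) (x : Fin 3 → ℝ) : Fin 3 → ℝ :=
  fun i => fderiv ℝ φ x (Pi.single i 1)

/-- The Euclidean norm on `ℝ³`. -/
def enorm3 (v : Fin 3 → ℝ) : ℝ := Real.sqrt (∑ i, v i ^ 2)

/-- The unit normal `ν = ∇φ / |∇φ|` of the interface `Σ = {φ = 0}`. -/
def unitNormal (φ : (Fin 3 → ℝ) → ℝ) (x : Fin 3 → ℝ) : Fin 3 → ℝ :=
  (enorm3 (grad3 φ x))⁻¹ • grad3 φ x

lemma enorm3_pos {v : Fin 3 → ℝ} (hv : v ≠ 0) : 0 < enorm3 v := by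
  rcases Function.ne_iff.1 hv with ⟨i, hi⟩
  have hi' : v i ≠ 0 := hi
  have : (0:ℝ) < ∑ j, v j ^ 2 :=
    Finset.sum_pos' (fun j _ => sq_nonneg _) ⟨i, Finset.mem_univ i, by positivity⟩
  exact Real.sqrt_pos.2 this

/-- If `ψ` is strictly differentiable and vanishes on the level set `{φ = 0}` of `φ`, whose
strict derivative at `z` is nonzero, then `∇ψ(z)` is parallel to `∇φ(z)`. -/
lemma grad_parallel {ψ φ : (Fin 3 → ℝ) → ℝ} {ψ' φ' : (Fin 3 → ℝ) →L[ℝ] ℝ} {z : Fin 3 → ℝ}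
    (hψ : HasStrictFDerivAt ψ ψ' z) (hφ : HasStrictFDerivAt φ φ' z) (hφ0 : φ' ≠ 0)
    (hz : φ z = 0) (h0 : ∀ x, φ x = 0 → ψ x = 0) : ∃ c : ℝ, ψ' = c • φ' := by
  have hextr : IsLocalExtrOn ψ {x | φ x = φ z} z := by
    left
    apply eventually_nhdsWithin_of_forall
    intro x hx
    have hx0 : φ x = 0 := by rw [Set.mem_setOf_eq] at hx; rw [hx, hz]
    rw [h0 z hz, h0 x hx0]
  obtain ⟨a, b, hab, hsum⟩ := hextr.exists_multipliers_of_hasStrictFDerivAt_1d hφ hψ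
  by_cases hb : b = 0
  · exfalso
    subst hb
    have ha : a ≠ 0 := by
      intro h; subst h; exact hab rfl
    have : a • φ' = 0 := by simpa using hsum
    rcases smul_eq_zero.1 this with h | h
    · exact ha h
    · exact hφ0 h
  · refine ⟨b⁻¹ * (-a), ?_⟩
    have h1 : b • ψ' = -(a • φ') := by
      rw [add_comm] at hsum
      exact eq_neg_of_add_eq_zero_left hsum
    calc ψ' = b⁻¹ • (b • ψ') := by rw [smul_smul, inv_mul_cancel₀ hb, one_smul]
    _ = b⁻¹ • (-(a • φ')) := by rw [h1]
    _ = (b⁻¹ * (-a)) • φ' := by module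

set_option maxHeartbeats 2000000 in
/-- Key pointwise lemma: if `u` is `C¹`, `φ` is `C²` with nonvanishing gradient at `z ∈ {φ = 0}`,
and `u × ∇φ = 0` on the level set `{φ = 0}`, then `curl u · ∇φ = 0` at `z`. -/
lemma key_curl_dot {φ : (Fin 3 → ℝ) → ℝ} {u : (Fin 3 → ℝ) → (Fin 3 → ℝ)} {z : Fin 3 → ℝ}
    (hφ : ContDiff ℝ 2 φ) (hu : ContDiff ℝ 1 u) (hz : φ z = 0)
    (hg : grad3 φ z ≠ 0)
    (hS : ∀ x, φ x = 0 → crossProduct (u x) (grad3 φ x) = 0) :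
    curl3 u z ⬝ᵥ grad3 φ z = 0 := by
  have hφd : Differentiable ℝ φ := hφ.differentiable (by norm_num)
  have hf'c : ContDiff ℝ 1 (fderiv ℝ φ) := hφ.fderiv_right (by norm_num)
  have hΦs : HasStrictFDerivAt (fderiv ℝ φ) (fderiv ℝ (fderiv ℝ φ) z) z :=
    hf'c.hasStrictFDerivAt (by norm_num)
  have hsym : ∀ v w, fderiv ℝ (fderiv ℝ φ) z v w = fderiv ℝ (fderiv ℝ φ) z w v :=
    second_derivative_symmetric (fun y => (hφd y).hasFDerivAt) hΦs.hasFDerivAt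
  have hUs : HasStrictFDerivAt u (fderiv ℝ u z) z := hu.hasStrictFDerivAt (by norm_num)
  have hu' : ∀ a : Fin 3, HasStrictFDerivAt (fun x => u x a)
      ((ContinuousLinearMap.proj a : (Fin 3 → ℝ) →L[ℝ] ℝ).comp (fderiv ℝ u z)) z :=
    fun a => (ContinuousLinearMap.proj a :
      (Fin 3 → ℝ) →L[ℝ] ℝ).hasStrictFDerivAt.comp z hUs
  have hgb : ∀ b : Fin 3, HasStrictFDerivAt (fun x => fderiv ℝ φ x (Pi.single b 1))
      ((ContinuousLinearMap.apply ℝ ℝ ((Pi.single b 1 : Fin 3 → ℝ))).comp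
        (fderiv ℝ (fderiv ℝ φ) z)) z :=
    fun b => (ContinuousLinearMap.apply ℝ ℝ
      ((Pi.single b 1 : Fin 3 → ℝ))).hasStrictFDerivAt.comp z hΦs
  have hφ's : HasStrictFDerivAt φ (fderiv ℝ φ z) z := hφ.hasStrictFDerivAt (by norm_num)
  have hφ'0 : (fderiv ℝ φ z) ≠ 0 := by
    intro h
    apply hg
    funext i
    show fderiv ℝ φ z (Pi.single i 1) = 0
    rw [h]; rfl
  have hcross : ∀ x, φ x = 0 →
      (u x 1 * grad3 φ x 2 - u x 2 * grad3 φ x 1 = 0) ∧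
      (u x 2 * grad3 φ x 0 - u x 0 * grad3 φ x 2 = 0) ∧
      (u x 0 * grad3 φ x 1 - u x 1 * grad3 φ x 0 = 0) := by
    intro x hx
    have h := hS x hx
    rw [cross_apply] at h
    refine ⟨congrFun h 0, congrFun h 1, congrFun h 2⟩
  have hpsi0 : HasStrictFDerivAt
      (fun x => u x 1 * fderiv ℝ φ x (Pi.single 2 1)
        - u x 2 * fderiv ℝ φ x (Pi.single 1 1))
      ((u z 1 • ((ContinuousLinearMap.apply ℝ ℝ ((Pi.single 2 1 : Fin 3 → ℝ))).comp
          (fderiv ℝ (fderiv ℝ φ) z))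
        + fderiv ℝ φ z (Pi.single 2 1) • ((ContinuousLinearMap.proj 1 :
            (Fin 3 → ℝ) →L[ℝ] ℝ).comp (fderiv ℝ u z)))
       - (u z 2 • ((ContinuousLinearMap.apply ℝ ℝ ((Pi.single 1 1 : Fin 3 → ℝ))).comp
          (fderiv ℝ (fderiv ℝ φ) z))
        + fderiv ℝ φ z (Pi.single 1 1) • ((ContinuousLinearMap.proj 2 :
            (Fin 3 → ℝ) →L[ℝ] ℝ).comp (fderiv ℝ u z)))) z :=
    ((hu' 1).mul (hgb 2)).sub ((hu' 2).mul (hgb 1))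
  obtain ⟨c0, hc0⟩ := grad_parallel hpsi0 hφ's hφ'0 hz (fun x hx => by
    have h := (hcross x hx).1
    simpa [grad3] using h)
  have E0 : ∀ j : Fin 3, u z 1 * fderiv ℝ (fderiv ℝ φ) z (Pi.single j 1) (Pi.single 2 1) + fderiv ℝ φ z (Pi.single 2 1) * fderiv ℝ u z (Pi.single j 1) 1 - (u z 2 * fderiv ℝ (fderiv ℝ φ) z (Pi.single j 1) (Pi.single 1 1) + fderiv ℝ φ z (Pi.single 1 1) * fderiv ℝ u z (Pi.single j 1) 2) = c0 * fderiv ℝ φ z (Pi.single j 1) := by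
    intro j
    have h := congrArg (fun L : (Fin 3 → ℝ) →L[ℝ] ℝ => L (Pi.single j 1)) hc0
    simp only [ContinuousLinearMap.sub_apply, ContinuousLinearMap.add_apply,
      ContinuousLinearMap.smul_apply, ContinuousLinearMap.comp_apply,
      ContinuousLinearMap.proj_apply, ContinuousLinearMap.apply_apply,
      smul_eq_mul] at h
    linear_combination h
  have hpsi1 : HasStrictFDerivAt
      (fun x => u x 2 * fderiv ℝ φ x (Pi.single 0 1)
        - u x 0 * fderiv ℝ φ x (Pi.single 2 1))
      ((u z 2 • ((ContinuousLinearMap.apply ℝ ℝ ((Pi.single 0 1 : Fin 3 → ℝ))).comp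
          (fderiv ℝ (fderiv ℝ φ) z))
        + fderiv ℝ φ z (Pi.single 0 1) • ((ContinuousLinearMap.proj 2 :
            (Fin 3 → ℝ) →L[ℝ] ℝ).comp (fderiv ℝ u z)))
       - (u z 0 • ((ContinuousLinearMap.apply ℝ ℝ ((Pi.single 2 1 : Fin 3 → ℝ))).comp
          (fderiv ℝ (fderiv ℝ φ) z))
        + fderiv ℝ φ z (Pi.single 2 1) • ((ContinuousLinearMap.proj 0 :
            (Fin 3 → ℝ) →L[ℝ] ℝ).comp (fderiv ℝ u z)))) z :=
    ((hu' 2).mul (hgb 0)).sub ((hu' 0).mul (hgb 2))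
  obtain ⟨c1, hc1⟩ := grad_parallel hpsi1 hφ's hφ'0 hz (fun x hx => by
    have h := (hcross x hx).2.1
    simpa [grad3] using h)
  have E1 : ∀ j : Fin 3, u z 2 * fderiv ℝ (fderiv ℝ φ) z (Pi.single j 1) (Pi.single 0 1) + fderiv ℝ φ z (Pi.single 0 1) * fderiv ℝ u z (Pi.single j 1) 2 - (u z 0 * fderiv ℝ (fderiv ℝ φ) z (Pi.single j 1) (Pi.single 2 1) + fderiv ℝ φ z (Pi.single 2 1) * fderiv ℝ u z (Pi.single j 1) 0) = c1 * fderiv ℝ φ z (Pi.single j 1) := by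
    intro j
    have h := congrArg (fun L : (Fin 3 → ℝ) →L[ℝ] ℝ => L (Pi.single j 1)) hc1
    simp only [ContinuousLinearMap.sub_apply, ContinuousLinearMap.add_apply,
      ContinuousLinearMap.smul_apply, ContinuousLinearMap.comp_apply,
      ContinuousLinearMap.proj_apply, ContinuousLinearMap.apply_apply,
      smul_eq_mul] at h
    linear_combination h
  have hpsi2 : HasStrictFDerivAt
      (fun x => u x 0 * fderiv ℝ φ x (Pi.single 1 1)
        - u x 1 * fderiv ℝ φ x (Pi.single 0 1))
      ((u z 0 • ((ContinuousLinearMap.apply ℝ ℝ ((Pi.single 1 1 : Fin 3 → ℝ))).comp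
          (fderiv ℝ (fderiv ℝ φ) z))
        + fderiv ℝ φ z (Pi.single 1 1) • ((ContinuousLinearMap.proj 0 :
            (Fin 3 → ℝ) →L[ℝ] ℝ).comp (fderiv ℝ u z)))
       - (u z 1 • ((ContinuousLinearMap.apply ℝ ℝ ((Pi.single 0 1 : Fin 3 → ℝ))).comp
          (fderiv ℝ (fderiv ℝ φ) z))
        + fderiv ℝ φ z (Pi.single 0 1) • ((ContinuousLinearMap.proj 1 :
            (Fin 3 → ℝ) →L[ℝ] ℝ).comp (fderiv ℝ u z)))) z :=
    ((hu' 0).mul (hgb 1)).sub ((hu' 1).mul (hgb 0))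
  obtain ⟨c2, hc2⟩ := grad_parallel hpsi2 hφ's hφ'0 hz (fun x hx => by
    have h := (hcross x hx).2.2
    simpa [grad3] using h)
  have E2 : ∀ j : Fin 3, u z 0 * fderiv ℝ (fderiv ℝ φ) z (Pi.single j 1) (Pi.single 1 1) + fderiv ℝ φ z (Pi.single 1 1) * fderiv ℝ u z (Pi.single j 1) 0 - (u z 1 * fderiv ℝ (fderiv ℝ φ) z (Pi.single j 1) (Pi.single 0 1) + fderiv ℝ φ z (Pi.single 0 1) * fderiv ℝ u z (Pi.single j 1) 1) = c2 * fderiv ℝ φ z (Pi.single j 1) := by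
    intro j
    have h := congrArg (fun L : (Fin 3 → ℝ) →L[ℝ] ℝ => L (Pi.single j 1)) hc2
    simp only [ContinuousLinearMap.sub_apply, ContinuousLinearMap.add_apply,
      ContinuousLinearMap.smul_apply, ContinuousLinearMap.comp_apply,
      ContinuousLinearMap.proj_apply, ContinuousLinearMap.apply_apply,
      smul_eq_mul] at h
    linear_combination h
  obtain ⟨hC0, hC1, hC2⟩ := hcross z hz
  simp only [grad3] at hC0 hC1 hC2
  have hN : (0:ℝ) < ((fderiv ℝ φ z (Pi.single 0 1))^2 + (fderiv ℝ φ z (Pi.single 1 1))^2 + (fderiv ℝ φ z (Pi.single 2 1))^2) := by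
    rcases Function.ne_iff.1 hg with ⟨i, hi⟩
    have hi' : fderiv ℝ φ z (Pi.single i 1) ≠ 0 := hi
    have hsq : 0 < fderiv ℝ φ z (Pi.single i 1) ^ 2 := by positivity
    have hle : fderiv ℝ φ z (Pi.single i 1) ^ 2
        ≤ ∑ j : Fin 3, fderiv ℝ φ z (Pi.single j 1) ^ 2 :=
      Finset.single_le_sum (f := fun j => fderiv ℝ φ z (Pi.single j 1) ^ 2)
        (fun j _ => sq_nonneg _) (Finset.mem_univ i)
    rw [Fin.sum_univ_three] at hle
    linarith
  have hexp : curl3 u z ⬝ᵥ grad3 φ z = (fderiv ℝ u z (Pi.single 1 1) 2 - fderiv ℝ u z (Pi.single 2 1) 1) * (fderiv ℝ φ z (Pi.single 0 1)) + (fderiv ℝ u z (Pi.single 2 1) 0 - fderiv ℝ u z (Pi.single 0 1) 2) * (fderiv ℝ φ z (Pi.single 1 1)) + (fderiv ℝ u z (Pi.single 0 1) 1 - fderiv ℝ u z (Pi.single 1 1) 0) * (fderiv ℝ φ z (Pi.single 2 1)) := by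
    simp [curl3, pderiv3, grad3, dotProduct, Fin.sum_univ_three]
  have hTN : (curl3 u z ⬝ᵥ grad3 φ z) * ((fderiv ℝ φ z (Pi.single 0 1))^2 + (fderiv ℝ φ z (Pi.single 1 1))^2 + (fderiv ℝ φ z (Pi.single 2 1))^2) = 0 := by
    rw [hexp]
    linear_combination ((fderiv ℝ φ z (Pi.single 0 1))^2 + (fderiv ℝ φ z (Pi.single 1 1))^2 + (fderiv ℝ φ z (Pi.single 2 1))^2) * (E0 0)
      + ((fderiv ℝ φ z (Pi.single 0 1))^2 + (fderiv ℝ φ z (Pi.single 1 1))^2 + (fderiv ℝ φ z (Pi.single 2 1))^2) * (E1 1)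
      + ((fderiv ℝ φ z (Pi.single 0 1))^2 + (fderiv ℝ φ z (Pi.single 1 1))^2 + (fderiv ℝ φ z (Pi.single 2 1))^2) * (E2 2)
      - (fderiv ℝ φ z (Pi.single 0 1)) * (fderiv ℝ φ z (Pi.single 0 1)) * (E0 0)
      - (fderiv ℝ φ z (Pi.single 0 1)) * (fderiv ℝ φ z (Pi.single 1 1)) * (E0 1)
      - (fderiv ℝ φ z (Pi.single 0 1)) * (fderiv ℝ φ z (Pi.single 2 1)) * (E0 2)
      - (fderiv ℝ φ z (Pi.single 1 1)) * (fderiv ℝ φ z (Pi.single 0 1)) * (E1 0)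
      - (fderiv ℝ φ z (Pi.single 1 1)) * (fderiv ℝ φ z (Pi.single 1 1)) * (E1 1)
      - (fderiv ℝ φ z (Pi.single 1 1)) * (fderiv ℝ φ z (Pi.single 2 1)) * (E1 2)
      - (fderiv ℝ φ z (Pi.single 2 1)) * (fderiv ℝ φ z (Pi.single 0 1)) * (E2 0)
      - (fderiv ℝ φ z (Pi.single 2 1)) * (fderiv ℝ φ z (Pi.single 1 1)) * (E2 1)
      - (fderiv ℝ φ z (Pi.single 2 1)) * (fderiv ℝ φ z (Pi.single 2 1)) * (E2 2)
      + ((fderiv ℝ φ z (Pi.single 0 1))^2 + (fderiv ℝ φ z (Pi.single 1 1))^2 + (fderiv ℝ φ z (Pi.single 2 1))^2) * (u z 0) * (hsym (Pi.single 1 1) (Pi.single 2 1))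
      - ((fderiv ℝ φ z (Pi.single 0 1))^2 + (fderiv ℝ φ z (Pi.single 1 1))^2 + (fderiv ℝ φ z (Pi.single 2 1))^2) * (u z 1) * (hsym (Pi.single 0 1) (Pi.single 2 1))
      + ((fderiv ℝ φ z (Pi.single 0 1))^2 + (fderiv ℝ φ z (Pi.single 1 1))^2 + (fderiv ℝ φ z (Pi.single 2 1))^2) * (u z 2) * (hsym (Pi.single 0 1) (Pi.single 1 1))
      - ((fderiv ℝ φ z (Pi.single 0 1)) * (fderiv ℝ (fderiv ℝ φ) z (Pi.single 0 1) (Pi.single 0 1)) + (fderiv ℝ φ z (Pi.single 1 1)) * (fderiv ℝ (fderiv ℝ φ) z (Pi.single 1 1) (Pi.single 0 1)) + (fderiv ℝ φ z (Pi.single 2 1)) * (fderiv ℝ (fderiv ℝ φ) z (Pi.single 2 1) (Pi.single 0 1))) * hC0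
      - ((fderiv ℝ φ z (Pi.single 0 1)) * (fderiv ℝ (fderiv ℝ φ) z (Pi.single 0 1) (Pi.single 1 1)) + (fderiv ℝ φ z (Pi.single 1 1)) * (fderiv ℝ (fderiv ℝ φ) z (Pi.single 1 1) (Pi.single 1 1)) + (fderiv ℝ φ z (Pi.single 2 1)) * (fderiv ℝ (fderiv ℝ φ) z (Pi.single 2 1) (Pi.single 1 1))) * hC1
      - ((fderiv ℝ φ z (Pi.single 0 1)) * (fderiv ℝ (fderiv ℝ φ) z (Pi.single 0 1) (Pi.single 2 1)) + (fderiv ℝ φ z (Pi.single 1 1)) * (fderiv ℝ (fderiv ℝ φ) z (Pi.single 1 1) (Pi.single 2 1)) + (fderiv ℝ φ z (Pi.single 2 1)) * (fderiv ℝ (fderiv ℝ φ) z (Pi.single 2 1) (Pi.single 2 1))) * hC2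
  rcases mul_eq_zero.1 hTN with h | h
  · exact h
  · exact absurd h hN.ne'

set_option maxHeartbeats 2000000 in
/-- Conservation of the magnetic interface condition: if the two-sided fields satisfy
`∂_t B_± = -curl E_±`, the tangential jump `[E × ν] = 0` holds on the interface
`Σ = {φ = 0}` (a C² surface with non-vanishing normal), and the normal jump
`[B·ν]` vanishes at `t₀`, then `[B·ν] = 0` on `Σ` for all `t ∈ [t₀,T]`. -/
theorem stmt18 (t₀ T : ℝ) (hT : t₀ < T)
    (φ : (Fin 3 → ℝ) → ℝ) (hφ : ContDiff ℝ 2 φ)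
    (hreg : ∀ x, φ x = 0 → grad3 φ x ≠ 0)
    (Ep Em Bp Bm : ℝ → (Fin 3 → ℝ) → (Fin 3 → ℝ))
    (hE : ∀ t ∈ Set.Icc t₀ T, ContDiff ℝ 1 (Ep t) ∧ ContDiff ℝ 1 (Em t))
    (hBp : ∀ t ∈ Set.Icc t₀ T, ∀ x, HasDerivAt (fun s => Bp s x) (-(curl3 (Ep t) x)) t)
    (hBm : ∀ t ∈ Set.Icc t₀ T, ∀ x, HasDerivAt (fun s => Bm s x) (-(curl3 (Em t) x)) t)
    (hjump : ∀ t ∈ Set.Icc t₀ T, ∀ x, φ x = 0 →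
      crossProduct (Ep t x - Em t x) (unitNormal φ x) = 0)
    (hinit : ∀ x, φ x = 0 → (Bp t₀ x - Bm t₀ x) ⬝ᵥ unitNormal φ x = 0) :
    ∀ t ∈ Set.Icc t₀ T, ∀ x, φ x = 0 → (Bp t x - Bm t x) ⬝ᵥ unitNormal φ x = 0 := by
  intro t ht x hx
  -- the jump condition transferred to the (unnormalized) gradient
  have hSg : ∀ s ∈ Set.Icc t₀ T, ∀ y, φ y = 0 →
      crossProduct (Ep s y - Em s y) (grad3 φ y) = 0 := by
    intro s hs y hy
    have h := hjump s hs y hy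
    have hgy : grad3 φ y ≠ 0 := hreg y hy
    have hc : (enorm3 (grad3 φ y))⁻¹ ≠ 0 := inv_ne_zero (enorm3_pos hgy).ne'
    rw [unitNormal] at h
    rw [_root_.map_smul] at h
    rcases smul_eq_zero.1 h with h' | h'
    · exact absurd h' hc
    · exact h'
  -- key: the curl of the jump dotted with the gradient vanishes on the interface
  have hkey : ∀ s ∈ Set.Icc t₀ T,
      curl3 (fun y => Ep s y - Em s y) x ⬝ᵥ grad3 φ x = 0 := by
    intro s hs
    exact key_curl_dot hφ ((hE s hs).1.sub (hE s hs).2) hx (hreg x hx) (hSg s hs)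
  -- the curl of the difference is the difference of curls (componentwise)
  have hcurlsub : ∀ s ∈ Set.Icc t₀ T, ∀ i : Fin 3,
      curl3 (fun y => Ep s y - Em s y) x i = curl3 (Ep s) x i - curl3 (Em s) x i := by
    intro s hs i
    have h1 : Differentiable ℝ (Ep s) := (hE s hs).1.differentiable (by norm_num)
    have h2 : Differentiable ℝ (Em s) := (hE s hs).2.differentiable (by norm_num)
    have hfd : ∀ y : Fin 3 → ℝ, fderiv ℝ (fun w => Ep s w - Em s w) y
        = fderiv ℝ (Ep s) y - fderiv ℝ (Em s) y :=
      fun y => fderiv_sub (h1 y) (h2 y)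
    fin_cases i <;>
      simp [curl3, pderiv3, hfd, ContinuousLinearMap.sub_apply, Pi.sub_apply] <;> ring
  -- the derivative of the normal jump is zero
  have hderiv : ∀ s ∈ Set.Icc t₀ T,
      HasDerivAt (fun r => (Bp r x - Bm r x) ⬝ᵥ unitNormal φ x) 0 s := by
    intro s hs
    have hBpc : ∀ i : Fin 3, HasDerivAt (fun r => Bp r x i) ((-(curl3 (Ep s) x)) i) s := by
      intro i
      have := (ContinuousLinearMap.proj i : (Fin 3 → ℝ) →L[ℝ] ℝ).hasFDerivAt.comp_hasDerivAt
        s (hBp s hs x)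
      exact this
    have hBmc : ∀ i : Fin 3, HasDerivAt (fun r => Bm r x i) ((-(curl3 (Em s) x)) i) s := by
      intro i
      have := (ContinuousLinearMap.proj i : (Fin 3 → ℝ) →L[ℝ] ℝ).hasFDerivAt.comp_hasDerivAt
        s (hBm s hs x)
      exact this
    have hsum : HasDerivAt (fun r => ∑ i : Fin 3, (Bp r x i - Bm r x i) * unitNormal φ x i)
        (∑ i : Fin 3, ((-(curl3 (Ep s) x)) i - (-(curl3 (Em s) x)) i) * unitNormal φ x i) s :=
      HasDerivAt.fun_sum (fun i _ => (((hBpc i).sub (hBmc i)).mul_const _))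
    have hval : (∑ i : Fin 3, ((-(curl3 (Ep s) x)) i - (-(curl3 (Em s) x)) i)
        * unitNormal φ x i) = 0 := by
      have hk := hkey s hs
      have hcs := hcurlsub s hs
      simp only [dotProduct, Fin.sum_univ_three] at hk
      rw [hcs 0, hcs 1, hcs 2] at hk
      simp only [Fin.sum_univ_three, Pi.neg_apply, unitNormal, Pi.smul_apply, smul_eq_mul]
      linear_combination (-(enorm3 (grad3 φ x))⁻¹) * hk
    rw [hval] at hsum
    have : (fun r => (Bp r x - Bm r x) ⬝ᵥ unitNormal φ x)
        = (fun r => ∑ i : Fin 3, (Bp r x i - Bm r x i) * unitNormal φ x i) := by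
      funext r
      simp [dotProduct, Pi.sub_apply]
    rw [this]
    exact hsum
  have hcont : ContinuousOn (fun r => (Bp r x - Bm r x) ⬝ᵥ unitNormal φ x) (Set.Icc t₀ T) :=
    fun s hs => (hderiv s hs).continuousAt.continuousWithinAt
  have hconst := constant_of_has_deriv_right_zero hcont
    (fun s hs => (hderiv s (Set.Ico_subset_Icc_self hs)).hasDerivWithinAt)
  rw [hconst t ht]
  exact hinit x hx
end
end

section
/- Under the hypotheses of the preceding interface setting, suppose additionally ∂_t D_± = curl H_± - J_± on G_± with J ∈ L²(J, ℋ(div,G)), the tangential jump satisfies [H × ν] = J_Σ on J × Σ with J_Σ ∈ L²(J, H(div,Σ)), and define ρ_Σ(t) = ρ_{Σ,0} - ∫_{t₀}^t (div_Σ J_Σ(s) - [J·ν](s)) ds. If [D·ν](t₀) = -ρ_{Σ,0} on Σ, then [D·ν](t) = -ρ_Σ(t) on Σ for all t ∈ J. -/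
open Matrix intervalIntegral

noncomputable section

/-- The Jacobian entry `∂_j F_i` of a vector field `F : ℝ³ → ℝ³`. -/
def jac3 (F : (Fin 3 → ℝ) → (Fin 3 → ℝ)) (x : Fin 3 → ℝ) (i j : Fin 3) : ℝ :=
  pderiv3 F j x i

/-- The surface divergence on `Σ = {φ = 0}` of a (tangential) field `F`:
`div_Σ F = div F - ν·(DF ν)`, which on `Σ` depends only on `F|_Σ`. -/
def divSurf (φ : (Fin 3 → ℝ) → ℝ) (F : (Fin 3 → ℝ) → (Fin 3 → ℝ)) (x : Fin 3 → ℝ) : ℝ :=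
  (∑ i, jac3 F x i i) -
    ∑ i, ∑ j, unitNormal φ x i * jac3 F x i j * unitNormal φ x j

/-- component of the gradient as a function. -/
def pk (φ : (Fin 3 → ℝ) → ℝ) (k : Fin 3) (y : Fin 3 → ℝ) : ℝ := fderiv ℝ φ y (Pi.single k 1)

/-- squared norm of the gradient as a function. -/
def Sq (φ : (Fin 3 → ℝ) → ℝ) (y : Fin 3 → ℝ) : ℝ := ∑ k, (pk φ k y) ^ 2

lemma unitNormal_eq (φ : (Fin 3 → ℝ) → ℝ) (y : Fin 3 → ℝ) (b : Fin 3) :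
    unitNormal φ y b = (Real.sqrt (Sq φ y))⁻¹ * pk φ b y := by
  simp [unitNormal, enorm3, grad3, Sq, pk]

lemma Sq_pos {φ : (Fin 3 → ℝ) → ℝ} {x : Fin 3 → ℝ} (hg : grad3 φ x ≠ 0) : 0 < Sq φ x := by
  rcases Function.ne_iff.1 hg with ⟨i, hi⟩
  have hi' : pk φ i x ≠ 0 := by simpa [grad3, pk] using hi
  have : 0 < pk φ i x ^ 2 := by positivity
  calc (0:ℝ) < pk φ i x ^2 := this
    _ ≤ Sq φ x := Finset.single_le_sum (f := fun k => pk φ k x ^2) (fun k _ => by positivity)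
        (Finset.mem_univ i)

lemma sqrt_Sq_pos {φ : (Fin 3 → ℝ) → ℝ} {x : Fin 3 → ℝ} (hg : grad3 φ x ≠ 0) :
    0 < Real.sqrt (Sq φ x) := Real.sqrt_pos.2 (Sq_pos hg)

lemma sq_sqrt_Sq {φ : (Fin 3 → ℝ) → ℝ} {x : Fin 3 → ℝ} (hg : grad3 φ x ≠ 0) :
    Real.sqrt (Sq φ x) ^ 2 = pk φ 0 x ^2 + pk φ 1 x ^2 + pk φ 2 x ^2 := by
  rw [Real.sq_sqrt (Sq_pos hg).le, Sq, Fin.sum_univ_three]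

lemma fderiv_phi_ne_zero {φ : (Fin 3 → ℝ) → ℝ} {x : Fin 3 → ℝ} (hg : grad3 φ x ≠ 0) :
    fderiv ℝ φ x ≠ 0 := by
  intro hc
  apply hg
  funext i
  simp [grad3, hc]
open ContinuousLinearMap

/-- If a differentiable function `h` vanishes on the level set `{φ = 0}` and `w` is tangent to
that level set at `x` (i.e. `fderiv φ x w = 0`), then `fderiv h x w = 0`. -/
lemma tangential_deriv_zero {φ : (Fin 3 → ℝ) → ℝ} (hφ : ContDiff ℝ 2 φ)
    {x : Fin 3 → ℝ} (hx : φ x = 0) (hgrad : fderiv ℝ φ x ≠ 0)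
    {h : (Fin 3 → ℝ) → (Fin 3 → ℝ)} (hh : DifferentiableAt ℝ h x)
    (h0 : ∀ y, φ y = 0 → h y = 0) {w : Fin 3 → ℝ} (hw : fderiv ℝ φ x w = 0) :
    fderiv ℝ h x w = 0 := by
  set f' : (Fin 3 → ℝ) →L[ℝ] ℝ := fderiv ℝ φ x with hf'def
  have hf : HasStrictFDerivAt φ f' x :=
    (hφ.contDiffAt).hasStrictFDerivAt (by norm_num)
  have hsurj : f'.range = ⊤ := by
    rcases ContinuousLinearMap.exists_ne_zero hgrad with ⟨v, hv⟩
    rw [LinearMap.range_eq_top]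
    intro z
    exact ⟨(z / f' v) • v, by simp [div_mul_eq_mul_div, mul_comm]; field_simp⟩
  set ψ := hf.implicitFunction φ f' hsurj with hψdef
  have hwker : w ∈ f'.ker := by simpa using hw
  set wk : f'.ker := ⟨w, hwker⟩ with hwk
  set γ : ℝ → (Fin 3 → ℝ) := fun t => ψ (φ x) (t • wk) with hγ
  -- γ stays in the level set near 0
  have hmap := hf.map_implicitFunction_eq hsurj
  have htend : Filter.Tendsto (fun t : ℝ => ((φ x : ℝ), t • wk)) (nhds 0)
      (nhds ((φ x, 0) : ℝ × f'.ker)) := by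
    have : Filter.Tendsto (fun t : ℝ => t • wk) (nhds 0) (nhds ((0:ℝ) • wk)) :=
      (continuous_id.smul continuous_const).tendsto 0
    simpa using (tendsto_const_nhds.prodMk_nhds this)
  have hγlevel : ∀ᶠ t in nhds (0:ℝ), φ (γ t) = 0 := by
    have := htend.eventually hmap
    filter_upwards [this] with t ht
    simpa [hγ, hx] using ht
  -- γ 0 = x
  have hγ0 : γ 0 = x := by
    simp only [hγ, zero_smul]
    exact hf.implicitFunction_apply_image hsurj
  -- γ has derivative w at 0
  have hγd : HasDerivAt γ w 0 := by
    have h1 : HasStrictFDerivAt (ψ (φ x)) (f'.ker).subtypeL 0 :=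
      hf.to_implicitFunction hsurj
    have h2 : HasDerivAt (fun t : ℝ => t • wk) wk 0 := by
      simpa using (hasDerivAt_id (0:ℝ)).smul_const wk
    have h1' : HasFDerivAt (ψ (φ x)) (f'.ker).subtypeL ((0:ℝ) • wk) := by
      simpa using h1.hasFDerivAt
    have := h1'.comp_hasDerivAt 0 h2
    exact this
  -- h ∘ γ vanishes near 0, so its derivative vanishes
  have hcomp : HasDerivAt (fun t => h (γ t)) (fderiv ℝ h x w) 0 := by
    have hhx : HasFDerivAt h (fderiv ℝ h x) (γ 0) := by rw [hγ0]; exact hh.hasFDerivAt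
    exact hhx.comp_hasDerivAt 0 hγd
  have hzero : HasDerivAt (fun t => h (γ t)) 0 0 := by
    have hconst : HasDerivAt (fun _ : ℝ => (0 : Fin 3 → ℝ)) 0 0 := hasDerivAt_const _ _
    apply hconst.congr_of_eventuallyEq
    filter_upwards [hγlevel] with t ht
    exact (h0 _ ht)
  exact hcomp.unique hzero
lemma fderiv_phi_apply_grad {φ : (Fin 3 → ℝ) → ℝ} {x : Fin 3 → ℝ} (hg : grad3 φ x ≠ 0) :
    fderiv ℝ φ x (unitNormal φ x) = Real.sqrt (Sq φ x) := by
  have hc := sqrt_Sq_pos hg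
  have h1 : unitNormal φ x = (Real.sqrt (Sq φ x))⁻¹ • grad3 φ x := by
    funext b; rw [unitNormal_eq]; simp [grad3, pk]
  have h2 : grad3 φ x = ∑ i, grad3 φ x i • (Pi.single i (1:ℝ) : Fin 3 → ℝ) := by
    funext j
    rw [Finset.sum_apply]
    simp [Pi.single_apply]
  rw [h1, _root_.map_smul, smul_eq_mul]
  nth_rewrite 1 [h2]
  rw [map_sum]
  have h3 : ∀ i, fderiv ℝ φ x (grad3 φ x i • (Pi.single i (1:ℝ) : Fin 3 → ℝ)) = pk φ i x ^ 2 := by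
    intro i; rw [_root_.map_smul]; simp [grad3, pk, sq]
  rw [Fin.sum_univ_three, h3 0, h3 1, h3 2, ← sq_sqrt_Sq hg]
  field_simp
lemma divSurf_congr {φ : (Fin 3 → ℝ) → ℝ} (hφ : ContDiff ℝ 2 φ)
    {x : Fin 3 → ℝ} (hx : φ x = 0) (hg : grad3 φ x ≠ 0)
    {F1 F2 : (Fin 3 → ℝ) → (Fin 3 → ℝ)} (h1 : DifferentiableAt ℝ F1 x)
    (h2 : DifferentiableAt ℝ F2 x) (heq : ∀ y, φ y = 0 → F1 y = F2 y) :
    divSurf φ F1 x = divSurf φ F2 x := by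
  have hc := sqrt_Sq_pos hg
  set h : (Fin 3 → ℝ) → (Fin 3 → ℝ) := fun y => F1 y - F2 y with hh
  have hhd : DifferentiableAt ℝ h x := h1.sub h2
  have h0 : ∀ y, φ y = 0 → h y = 0 := fun y hy => by simp [hh, heq y hy]
  have htang : ∀ w, fderiv ℝ φ x w = 0 → fderiv ℝ h x w = 0 :=
    fun w hw => tangential_deriv_zero hφ hx (fderiv_phi_ne_zero hg) hhd h0 hw
  have hEj : ∀ j, fderiv ℝ h x (Pi.single j 1) =
      unitNormal φ x j • fderiv ℝ h x (unitNormal φ x) := by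
    intro j
    have hw : fderiv ℝ φ x (Pi.single j 1 - unitNormal φ x j • unitNormal φ x) = 0 := by
      rw [map_sub, _root_.map_smul, fderiv_phi_apply_grad hg, unitNormal_eq, smul_eq_mul]
      have : fderiv ℝ φ x (Pi.single j 1) = pk φ j x := rfl
      rw [this]
      field_simp
      simp
    have := htang _ hw
    rw [map_sub, _root_.map_smul, sub_eq_zero] at this
    exact this
  have hjac : ∀ i j, jac3 F1 x i j = jac3 F2 x i j +
      unitNormal φ x j * (fderiv ℝ h x (unitNormal φ x)) i := by
    intro i j
    have hs : fderiv ℝ h x (Pi.single j 1) =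
        fderiv ℝ F1 x (Pi.single j 1) - fderiv ℝ F2 x (Pi.single j 1) := by
      rw [hh, fderiv_fun_sub h1 h2]; simp
    have := hEj j
    rw [hs] at this
    have := congrFun (congrArg (fun v => (v : Fin 3 → ℝ)) this) i
    simp only [Pi.sub_apply, Pi.smul_apply, smul_eq_mul] at this
    simp only [jac3, pderiv3]
    linarith
  have hnorm : unitNormal φ x 0 ^2 + unitNormal φ x 1 ^2 + unitNormal φ x 2 ^2 = 1 := by
    simp only [unitNormal_eq]
    have h2 := sq_sqrt_Sq hg
    field_simp
    linarith
  simp only [divSurf, Fin.sum_univ_three, hjac]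
  set n0 := unitNormal φ x 0; set n1 := unitNormal φ x 1; set n2 := unitNormal φ x 2
  set M0 := (fderiv ℝ h x (unitNormal φ x)) 0
  set M1 := (fderiv ℝ h x (unitNormal φ x)) 1
  set M2 := (fderiv ℝ h x (unitNormal φ x)) 2
  linear_combination (-(n0 * M0 + n1 * M1 + n2 * M2)) * hnorm
lemma keyscalar (n0 n1 n2 v0 v1 v2 G0 G1 G2
    a00 a01 a02 a10 a11 a12 a20 a21 a22
    m00 m01 m02 m10 m11 m12 m20 m21 m22 : ℝ)
    (hn : n0^2+n1^2+n2^2 = 1)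
    (hK0 : n0*m00 + n1*m10 + n2*m20 = 0)
    (hK1 : n0*m01 + n1*m11 + n2*m21 = 0)
    (hK2 : n0*m02 + n1*m12 + n2*m22 = 0)
    (hA0 : m21 - m12 = n1*v2 - n2*v1)
    (hA1 : m02 - m20 = n2*v0 - n0*v2)
    (hA2 : m10 - m01 = n0*v1 - n1*v0) :
    ((a10*n2 + G1*m20 - a20*n1 - G2*m10)
     + (a21*n0 + G2*m01 - a01*n2 - G0*m21)
     + (a02*n1 + G0*m12 - a12*n0 - G1*m02))
    - ( n0*(a10*n2 + G1*m20 - a20*n1 - G2*m10)*n0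
      + n0*(a11*n2 + G1*m21 - a21*n1 - G2*m11)*n1
      + n0*(a12*n2 + G1*m22 - a22*n1 - G2*m12)*n2
      + n1*(a20*n0 + G2*m00 - a00*n2 - G0*m20)*n0
      + n1*(a21*n0 + G2*m01 - a01*n2 - G0*m21)*n1
      + n1*(a22*n0 + G2*m02 - a02*n2 - G0*m22)*n2
      + n2*(a00*n1 + G0*m10 - a10*n0 - G1*m00)*n0
      + n2*(a01*n1 + G0*m11 - a11*n0 - G1*m01)*n1
      + n2*(a02*n1 + G0*m12 - a12*n0 - G1*m02)*n2)
    = (a21 - a12)*n0 + (a02 - a20)*n1 + (a10 - a01)*n2 := by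
  linear_combination
    (-(G0*(v1*n2-v2*n1)+G1*(v2*n0-v0*n2)+G2*(v0*n1-v1*n0)))*hn
    + (-(n1*G2-n2*G1))*hK0 + (-(n2*G0-n0*G2))*hK1 + (-(n0*G1-n1*G0))*hK2
    + ((n0^2+n1^2+n2^2-1)*G0 - n0*(G0*n0+G1*n1+G2*n2))*hA0
    + ((n0^2+n1^2+n2^2-1)*G1 - n1*(G0*n0+G1*n1+G2*n2))*hA1
    + ((n0^2+n1^2+n2^2-1)*G2 - n2*(G0*n0+G1*n1+G2*n2))*hA2
lemma auxN (c g0 g1 g2 : ℝ) (hc : c ≠ 0) (hcc : c^2 = g0^2+g1^2+g2^2) :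
    (c⁻¹*g0)^2 + (c⁻¹*g1)^2 + (c⁻¹*g2)^2 = 1 := by
  field_simp
  linarith
lemma auxK (c g0 g1 g2 h0 h1 h2 : ℝ) (hc : c ≠ 0) (hcc : c^2 = g0^2+g1^2+g2^2) :
    c⁻¹*g0*(c⁻¹*h0 + g0*(-(c^2)⁻¹*(1/(2*c)*(2*g0*h0+2*g1*h1+2*g2*h2))))
    + c⁻¹*g1*(c⁻¹*h1 + g1*(-(c^2)⁻¹*(1/(2*c)*(2*g0*h0+2*g1*h1+2*g2*h2))))
    + c⁻¹*g2*(c⁻¹*h2 + g2*(-(c^2)⁻¹*(1/(2*c)*(2*g0*h0+2*g1*h1+2*g2*h2)))) = 0 := by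
  have h : (g0^2+g1^2+g2^2) = c^2 := hcc.symm
  field_simp
  linear_combination (-(g0*h0+g1*h1+g2*h2)) * h
lemma auxA (c g0 g1 u0 u1 h01 h10 : ℝ) (hc : c ≠ 0) (hs : h01 = h10) :
    (c⁻¹*h01 + g1*u0) - (c⁻¹*h10 + g0*u1) = c⁻¹*g0*(-(c*u1)) - c⁻¹*g1*(-(c*u0)) := by
  field_simp
  linear_combination hs
set_option maxHeartbeats 1600000 in
lemma divSurf_cross {φ : (Fin 3 → ℝ) → ℝ} (hφ : ContDiff ℝ 2 φ)
    {G : (Fin 3 → ℝ) → (Fin 3 → ℝ)} (hG : ContDiff ℝ 1 G)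
    {x : Fin 3 → ℝ} (hg : grad3 φ x ≠ 0) :
    DifferentiableAt ℝ (fun y => crossProduct (G y) (unitNormal φ y)) x ∧
    divSurf φ (fun y => crossProduct (G y) (unitNormal φ y)) x
      = curl3 G x ⬝ᵥ unitNormal φ x := by
  have hφ1 : Differentiable ℝ φ := hφ.differentiable (by norm_num)
  have hφd : ∀ y, HasFDerivAt φ (fderiv ℝ φ y) y := fun y => (hφ1 y).hasFDerivAt
  have hf'c : ContDiff ℝ 1 (fderiv ℝ φ) := hφ.fderiv_right (by norm_num)
  have hf'' : HasFDerivAt (fderiv ℝ φ) (fderiv ℝ (fderiv ℝ φ) x) x :=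
    ((hf'c.differentiable one_ne_zero) x).hasFDerivAt
  set f'' := fderiv ℝ (fderiv ℝ φ) x with hf''def
  have hsym : ∀ v w, f'' v w = f'' w v := second_derivative_symmetric hφd hf''
  have hp : ∀ k : Fin 3, HasFDerivAt (pk φ k) (f''.flip (Pi.single k 1)) x := by
    intro k
    have h := hf''.clm_apply (hasFDerivAt_const (Pi.single k (1:ℝ) : Fin 3 → ℝ) x)
    have e : (fderiv ℝ φ x).comp (0 : (Fin 3 → ℝ) →L[ℝ] (Fin 3 → ℝ)) + f''.flip (Pi.single k 1)
        = f''.flip (Pi.single k 1) := by ext w; simp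
    rw [e] at h
    exact h
  set dS : (Fin 3 → ℝ) →L[ℝ] ℝ := ∑ k, (2 * pk φ k x) • f''.flip (Pi.single k 1) with hdS
  have hS : HasFDerivAt (Sq φ) dS x := by
    have h1 : ∀ k : Fin 3, HasFDerivAt (fun y => pk φ k y ^ 2)
        ((2 * pk φ k x) • f''.flip (Pi.single k 1)) x := by
      intro k
      have h := (hp k).mul (hp k)
      have e1 : (pk φ k * pk φ k) = fun y => pk φ k y ^2 := by
        funext y; rw [Pi.mul_apply]; ring
      rw [e1] at h
      convert h using 1
      any_goals rfl
      ext w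
      simp [two_mul]; ring
    exact HasFDerivAt.fun_sum (fun k _ => h1 k)
  set c := Real.sqrt (Sq φ x) with hcdef
  have hSpos : 0 < Sq φ x := Sq_pos hg
  have hc0 : 0 < c := sqrt_Sq_pos hg
  have hc2 : c^2 = pk φ 0 x ^2 + pk φ 1 x ^2 + pk φ 2 x ^2 := sq_sqrt_Sq hg
  have hcf : HasFDerivAt (fun y => Real.sqrt (Sq φ y)) ((1/(2*c)) • dS) x := by
    have := (Real.hasDerivAt_sqrt hSpos.ne').comp_hasFDerivAt x hS
    simpa [Function.comp_def, ← hcdef] using this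
  have hinv : HasFDerivAt (fun y => (Real.sqrt (Sq φ y))⁻¹)
      ((-(c^2)⁻¹) • ((1/(2*c)) • dS)) x := by
    have h0 : c ≠ 0 := hc0.ne'
    exact (hasDerivAt_inv h0).comp_hasFDerivAt x hcf
  set uψ : (Fin 3 → ℝ) →L[ℝ] ℝ := (-(c^2)⁻¹) • ((1/(2*c)) • dS) with huψ
  set ν : Fin 3 → (Fin 3 → ℝ) → ℝ := fun b y => (Real.sqrt (Sq φ y))⁻¹ * pk φ b y with hνdef
  set Dν : Fin 3 → ((Fin 3 → ℝ) →L[ℝ] ℝ) :=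
    fun b => c⁻¹ • f''.flip (Pi.single b 1) + pk φ b x • uψ with hDν
  have hν : ∀ b : Fin 3, HasFDerivAt (ν b) (Dν b) x := fun b => hinv.mul (hp b)
  have hGd : HasFDerivAt G (fderiv ℝ G x) x := ((hG.differentiable one_ne_zero) x).hasFDerivAt
  set dG := fderiv ℝ G x with hdG
  have hGa : ∀ a : Fin 3, HasFDerivAt (fun y => G y a)
      ((ContinuousLinearMap.proj a).comp dG) x := fun a => hasFDerivAt_pi'.1 hGd a
  set DK : Fin 3 → ((Fin 3 → ℝ) →L[ℝ] ℝ) :=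
    ![ (G x 1 • Dν 2 + ν 2 x • ((ContinuousLinearMap.proj 1).comp dG))
        - (G x 2 • Dν 1 + ν 1 x • ((ContinuousLinearMap.proj 2).comp dG)),
       (G x 2 • Dν 0 + ν 0 x • ((ContinuousLinearMap.proj 2).comp dG))
        - (G x 0 • Dν 2 + ν 2 x • ((ContinuousLinearMap.proj 0).comp dG)),
       (G x 0 • Dν 1 + ν 1 x • ((ContinuousLinearMap.proj 0).comp dG))
        - (G x 1 • Dν 0 + ν 0 x • ((ContinuousLinearMap.proj 1).comp dG)) ] with hDK
  have hKpi : HasFDerivAt (fun y => (crossProduct (G y) (unitNormal φ y) : Fin 3 → ℝ))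
      (ContinuousLinearMap.pi DK) x := by
    apply hasFDerivAt_pi''
    intro i
    have hcomp : ∀ i, (ContinuousLinearMap.proj i).comp (ContinuousLinearMap.pi DK) = DK i :=
      fun i => ContinuousLinearMap.proj_pi _ _
    rw [hcomp]
    fin_cases i
    · have e : (fun y => (crossProduct (G y) (unitNormal φ y) : Fin 3 → ℝ) 0)
          = fun y => G y 1 * ν 2 y - G y 2 * ν 1 y := by
        funext y; simp [cross_apply, hνdef, unitNormal_eq]
      rw [hDK]; simp only [Matrix.cons_val_zero]
      exact e ▸ ((hGa 1).mul (hν 2)).sub ((hGa 2).mul (hν 1))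
    · have e : (fun y => (crossProduct (G y) (unitNormal φ y) : Fin 3 → ℝ) 1)
          = fun y => G y 2 * ν 0 y - G y 0 * ν 2 y := by
        funext y; simp [cross_apply, hνdef, unitNormal_eq]
      rw [hDK]; simp only [Matrix.cons_val_one, Matrix.head_cons]
      exact e ▸ ((hGa 2).mul (hν 0)).sub ((hGa 0).mul (hν 2))
    · have e : (fun y => (crossProduct (G y) (unitNormal φ y) : Fin 3 → ℝ) 2)
          = fun y => G y 0 * ν 1 y - G y 1 * ν 0 y := by
        funext y; simp [cross_apply, hνdef, unitNormal_eq]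
      rw [hDK]; simp only [Matrix.cons_val_two, Matrix.tail_cons, Matrix.head_cons]
      exact e ▸ ((hGa 0).mul (hν 1)).sub ((hGa 1).mul (hν 0))
  refine ⟨hKpi.differentiableAt, ?_⟩
  have hjac : ∀ i j, jac3 (fun y => (crossProduct (G y) (unitNormal φ y) : Fin 3 → ℝ)) x i j
      = DK i (Pi.single j 1) := by
    intro i j
    rw [jac3, pderiv3, hKpi.fderiv]
    simp
  set U : Fin 3 → ℝ := fun j => -(c^2)⁻¹*(1/(2*c)*(2*pk φ 0 x*f'' (Pi.single j 1) (Pi.single 0 1)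
      + 2*pk φ 1 x*f'' (Pi.single j 1) (Pi.single 1 1)
      + 2*pk φ 2 x*f'' (Pi.single j 1) (Pi.single 2 1))) with hU
  have hDνval : ∀ b j : Fin 3, Dν b (Pi.single j 1)
      = c⁻¹ * f'' (Pi.single j 1) (Pi.single b 1) + pk φ b x * U j := by
    intro b j
    rw [hDν, hU]
    simp only [huψ, hdS, ContinuousLinearMap.add_apply, ContinuousLinearMap.smul_apply,
      ContinuousLinearMap.flip_apply, smul_eq_mul, ContinuousLinearMap.neg_apply,
      ContinuousLinearMap.coe_sum', Finset.sum_apply, Fin.sum_univ_three]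
    try ring
  have hc2' : c ≠ 0 := hc0.ne'
  have hkey := keyscalar (c⁻¹ * pk φ 0 x) (c⁻¹ * pk φ 1 x) (c⁻¹ * pk φ 2 x)
    (-(c * U 0)) (-(c * U 1)) (-(c * U 2)) (G x 0) (G x 1) (G x 2)
    (dG (Pi.single 0 1) 0) (dG (Pi.single 1 1) 0) (dG (Pi.single 2 1) 0)
    (dG (Pi.single 0 1) 1) (dG (Pi.single 1 1) 1) (dG (Pi.single 2 1) 1)
    (dG (Pi.single 0 1) 2) (dG (Pi.single 1 1) 2) (dG (Pi.single 2 1) 2)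
    (c⁻¹ * f'' (Pi.single 0 1) (Pi.single 0 1) + pk φ 0 x * U 0)
    (c⁻¹ * f'' (Pi.single 1 1) (Pi.single 0 1) + pk φ 0 x * U 1)
    (c⁻¹ * f'' (Pi.single 2 1) (Pi.single 0 1) + pk φ 0 x * U 2)
    (c⁻¹ * f'' (Pi.single 0 1) (Pi.single 1 1) + pk φ 1 x * U 0)
    (c⁻¹ * f'' (Pi.single 1 1) (Pi.single 1 1) + pk φ 1 x * U 1)
    (c⁻¹ * f'' (Pi.single 2 1) (Pi.single 1 1) + pk φ 1 x * U 2)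
    (c⁻¹ * f'' (Pi.single 0 1) (Pi.single 2 1) + pk φ 2 x * U 0)
    (c⁻¹ * f'' (Pi.single 1 1) (Pi.single 2 1) + pk φ 2 x * U 1)
    (c⁻¹ * f'' (Pi.single 2 1) (Pi.single 2 1) + pk φ 2 x * U 2)
    (auxN c _ _ _ hc2' hc2)
    (by rw [hU]; exact auxK c _ _ _ _ _ _ hc2' hc2)
    (by rw [hU]; exact auxK c _ _ _ _ _ _ hc2' hc2)
    (by rw [hU]; exact auxK c _ _ _ _ _ _ hc2' hc2)
    (auxA c _ _ _ _ _ _ hc2' (hsym _ _))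
    (auxA c _ _ _ _ _ _ hc2' (hsym _ _))
    (auxA c _ _ _ _ _ _ hc2' (hsym _ _))
  rw [divSurf]
  simp only [Fin.sum_univ_three, hjac, dotProduct, curl3, pderiv3, unitNormal_eq,
    Matrix.cons_val_zero, Matrix.cons_val_one, Matrix.head_cons, Matrix.cons_val_two,
    Matrix.tail_cons, hDK]
  simp only [ContinuousLinearMap.add_apply, ContinuousLinearMap.sub_apply,
    ContinuousLinearMap.smul_apply, ContinuousLinearMap.coe_smul', Pi.smul_apply,
    ContinuousLinearMap.comp_apply, ContinuousLinearMap.proj_apply,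
    Fin.sum_univ_three, smul_eq_mul, hνdef, hDνval]
  simp only [← hcdef, ← hdG]
  linear_combination hkey

/-- Conservation of the electric interface condition: assume `∂_t D_± = curl H_± - J_±`,
the tangential jump satisfies `[H × ν] = J_Σ` on `Σ = {φ = 0}`, and define
`ρ_Σ(t) = ρ_{Σ,0} - ∫_{t₀}^t (div_Σ J_Σ(s) - [J·ν](s)) ds`.  If `[D·ν](t₀) = -ρ_{Σ,0}`
on `Σ`, then `[D·ν](t) = -ρ_Σ(t)` on `Σ` for all `t ∈ [t₀,T]`. -/
theorem stmt19 (t₀ T : ℝ) (hT : t₀ < T)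
    (φ : (Fin 3 → ℝ) → ℝ) (hφ : ContDiff ℝ 2 φ)
    (hreg : ∀ x, φ x = 0 → grad3 φ x ≠ 0)
    (Hp Hm Dp Dm Jp Jm Jsig : ℝ → (Fin 3 → ℝ) → (Fin 3 → ℝ))
    (ρ0 : (Fin 3 → ℝ) → ℝ)
    (hH : ∀ t ∈ Set.Icc t₀ T, ContDiff ℝ 1 (Hp t) ∧ ContDiff ℝ 1 (Hm t))
    (hJsigreg : ∀ t ∈ Set.Icc t₀ T, ContDiff ℝ 1 (Jsig t))
    (hDp : ∀ t ∈ Set.Icc t₀ T, ∀ x,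
      HasDerivAt (fun s => Dp s x) (curl3 (Hp t) x - Jp t x) t)
    (hDm : ∀ t ∈ Set.Icc t₀ T, ∀ x,
      HasDerivAt (fun s => Dm s x) (curl3 (Hm t) x - Jm t x) t)
    (hJsig : ∀ t ∈ Set.Icc t₀ T, ∀ x, φ x = 0 →
      Jsig t x = crossProduct (Hp t x - Hm t x) (unitNormal φ x))
    (hcont : ∀ x, φ x = 0 → ContinuousOn
      (fun s => divSurf φ (Jsig s) x - (Jp s x - Jm s x) ⬝ᵥ unitNormal φ x) (Set.Icc t₀ T))
    (hinit : ∀ x, φ x = 0 → (Dp t₀ x - Dm t₀ x) ⬝ᵥ unitNormal φ x = -(ρ0 x)) :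
    ∀ t ∈ Set.Icc t₀ T, ∀ x, φ x = 0 →
      (Dp t x - Dm t x) ⬝ᵥ unitNormal φ x
        = -(ρ0 x - ∫ s in t₀..t,
            (divSurf φ (Jsig s) x - (Jp s x - Jm s x) ⬝ᵥ unitNormal φ x)) := by
  intro t ht x hx
  have hgx : grad3 φ x ≠ 0 := hreg x hx
  have hkeyI : ∀ s ∈ Set.Icc t₀ T, divSurf φ (Jsig s) x
      = (curl3 (fun y => Hp s y - Hm s y) x) ⬝ᵥ unitNormal φ x := by
    intro s hs
    obtain ⟨hHp, hHm⟩ := hH s hs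
    have hGs : ContDiff ℝ 1 (fun y => Hp s y - Hm s y) := hHp.sub hHm
    obtain ⟨hdiff, heq⟩ := divSurf_cross hφ hGs hgx
    rw [divSurf_congr hφ hx hgx ((hJsigreg s hs).differentiable one_ne_zero x) hdiff
      (fun y hy => hJsig s hs y hy), heq]
  have hcurl : ∀ s ∈ Set.Icc t₀ T, ∀ i : Fin 3,
      curl3 (fun y => Hp s y - Hm s y) x i = curl3 (Hp s) x i - curl3 (Hm s) x i := by
    intro s hs i
    obtain ⟨hHp, hHm⟩ := hH s hs
    have hps : ∀ j : Fin 3, pderiv3 (fun y => Hp s y - Hm s y) j x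
        = pderiv3 (Hp s) j x - pderiv3 (Hm s) j x := by
      intro j
      rw [pderiv3, pderiv3, pderiv3, fderiv_fun_sub ((hHp.differentiable one_ne_zero) x)
        ((hHm.differentiable one_ne_zero) x)]
      simp
    fin_cases i <;> simp [curl3, hps] <;> ring
  have hf : ∀ s ∈ Set.Icc t₀ T, HasDerivAt (fun τ => (Dp τ x - Dm τ x) ⬝ᵥ unitNormal φ x)
      (divSurf φ (Jsig s) x - (Jp s x - Jm s x) ⬝ᵥ unitNormal φ x) s := by
    intro s hs
    have h1 := hDp s hs x
    have h2 := hDm s hs x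
    have hXi : ∀ i : Fin 3, HasDerivAt (fun τ => Dp τ x i - Dm τ x i)
        ((curl3 (Hp s) x i - Jp s x i) - (curl3 (Hm s) x i - Jm s x i)) s := by
      intro i
      have e1 : HasDerivAt (fun τ => Dp τ x i) (curl3 (Hp s) x i - Jp s x i) s := by
        have := (ContinuousLinearMap.proj (R := ℝ) (φ := fun _ : Fin 3 => ℝ)
          i).hasFDerivAt.comp_hasDerivAt s h1
        simpa [Function.comp_def] using this
      have e2 : HasDerivAt (fun τ => Dm τ x i) (curl3 (Hm s) x i - Jm s x i) s := by
        have := (ContinuousLinearMap.proj (R := ℝ) (φ := fun _ : Fin 3 => ℝ)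
          i).hasFDerivAt.comp_hasDerivAt s h2
        simpa [Function.comp_def] using this
      exact e1.sub e2
    have hsum := (((hXi 0).mul_const (unitNormal φ x 0)).add
        ((hXi 1).mul_const (unitNormal φ x 1))).add ((hXi 2).mul_const (unitNormal φ x 2))
    have hfun : (fun τ => (Dp τ x - Dm τ x) ⬝ᵥ unitNormal φ x)
        = fun τ => (Dp τ x 0 - Dm τ x 0) * unitNormal φ x 0
          + (Dp τ x 1 - Dm τ x 1) * unitNormal φ x 1
          + (Dp τ x 2 - Dm τ x 2) * unitNormal φ x 2 := by
      funext τ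
      simp [dotProduct, Fin.sum_univ_three]
    rw [hfun]
    convert hsum using 1
    any_goals rfl
    rw [hkeyI s hs]
    simp only [dotProduct, Fin.sum_univ_three, Pi.sub_apply, hcurl s hs]
    ring
  have hmono : Set.uIcc t₀ t ⊆ Set.Icc t₀ T := by
    rw [Set.uIcc_of_le ht.1]
    exact Set.Icc_subset_Icc_right ht.2
  have hint : IntervalIntegrable
      (fun s => divSurf φ (Jsig s) x - (Jp s x - Jm s x) ⬝ᵥ unitNormal φ x)
      MeasureTheory.volume t₀ t := ((hcont x hx).mono hmono).intervalIntegrable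
  have heq := intervalIntegral.integral_eq_sub_of_hasDerivAt
    (f := fun τ => (Dp τ x - Dm τ x) ⬝ᵥ unitNormal φ x)
    (fun s hs => hf s (hmono hs)) hint
  rw [heq]
  have hi := hinit x hx
  linarith
end
end
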